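/- For every natural number k' ≥ 1, the t = -1 specialization of the conjectured Khovanov-Rozansky Poincaré polynomial of T(2,2k') equals the HOMFLY polynomial: q^{-N-2k'+1}·[N] + Σ_{l=1}^{k'-1} ( -q^{N+4l-2k'}·[N-1] + q^{-N+4l-2k'}·[N-1] ) + q^{2k'-1}·[N][N-1] = q^{-2k'}·s_2 + q^{2k'}·s_{11}. -/

import Mathlib

open scoped BigOperators

noncomputable def q : RatFunc ℚ := RatFunc.X

/-- Quantum integer `[n] = (q^n - q^{-n})/(q - q^{-1})`. -/
noncomputable def qi (n : ℤ) : RatFunc ℚ := (q ^ n - q ^ (-n)) / (q - q ^ (-1 : ℤ))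

/-- `s_2 = [N][N+1]/[2]`. -/
noncomputable def s2 (N : ℕ) : RatFunc ℚ := qi N * qi ((N : ℤ) + 1) / qi 2

/-- `s_{11} = [N][N-1]/[2]`. -/
noncomputable def s11 (N : ℕ) : RatFunc ℚ := qi N * qi ((N : ℤ) - 1) / qi 2

/-- HOMFLY polynomial of the torus knot/link `T(2,k)`. -/
noncomputable def H (N : ℕ) (k : ℤ) : RatFunc ℚ := q ^ (-k) * s2 N + (-q) ^ k * s11 N

lemma q_ne : q ≠ 0 := by simpa [q] using RatFunc.X_ne_zero (K := ℚ)

lemma q_pow_ne_one (n : ℕ) (hn : 0 < n) : q ^ n ≠ 1 := by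
  intro h
  have : ((Polynomial.X : Polynomial ℚ) ^ n) = 1 := by
    apply IsFractionRing.injective (Polynomial ℚ) (RatFunc ℚ)
    simpa [q, RatFunc.algebraMap_X, map_pow] using h
  have := congrArg Polynomial.natDegree this
  simp [Polynomial.natDegree_X_pow] at this
  omega

lemma h21 : q ^ 2 - 1 ≠ 0 := sub_ne_zero.mpr (q_pow_ne_one 2 (by norm_num))

lemma h41 : q ^ 4 - 1 ≠ 0 := sub_ne_zero.mpr (q_pow_ne_one 4 (by norm_num))

lemma hsub : q - q ^ (-1 : ℤ) ≠ 0 := by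
  simp only [zpow_neg, zpow_one]
  intro h
  apply q_pow_ne_one 2 (by norm_num)
  have hq := sub_eq_zero.mp h
  calc q ^ 2 = q * q := sq q
    _ = q * q⁻¹ := by rw [← hq]
    _ = 1 := mul_inv_cancel₀ q_ne

lemma qiN (N : ℕ) : qi N = q * ((q ^ N) ^ 2 - 1) / (q ^ N * (q ^ 2 - 1)) := by
  simp only [qi]
  rw [div_eq_div_iff hsub (mul_ne_zero (pow_ne_zero _ q_ne) h21)]
  simp only [zpow_neg, zpow_natCast, zpow_one]
  field_simp [q_ne]

lemma qiNm (N : ℕ) : qi ((N : ℤ) - 1) = ((q ^ N) ^ 2 - q ^ 2) / (q ^ N * (q ^ 2 - 1)) := by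
  simp only [qi]
  rw [div_eq_div_iff hsub (mul_ne_zero (pow_ne_zero _ q_ne) h21)]
  simp only [neg_sub, zpow_sub₀ q_ne, zpow_neg, zpow_natCast, zpow_one]
  field_simp [q_ne]

lemma qiNp (N : ℕ) : qi ((N : ℤ) + 1) = ((q ^ N) ^ 2 * q ^ 2 - 1) / (q ^ N * (q ^ 2 - 1)) := by
  simp only [qi]
  rw [div_eq_div_iff hsub (mul_ne_zero (pow_ne_zero _ q_ne) h21)]
  simp only [neg_add, zpow_add₀ q_ne, zpow_neg, zpow_natCast, zpow_one]
  field_simp [q_ne]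

lemma qi_two : qi 2 = q * (q ^ 4 - 1) / (q ^ 2 * (q ^ 2 - 1)) := by
  simp only [qi]
  rw [div_eq_div_iff hsub (mul_ne_zero (pow_ne_zero _ q_ne) h21)]
  simp only [zpow_neg, zpow_one, zpow_ofNat]
  field_simp [q_ne]

lemma geom (r : RatFunc ℚ) (m : ℕ) :
    (r - 1) * ∑ l ∈ Finset.Icc 1 m, r ^ l = r ^ (m + 1) - r := by
  induction m with
  | zero => simp
  | succ m ih =>
    rw [Finset.sum_Icc_succ_top (Nat.succ_le_succ (Nat.zero_le m))]
    linear_combination ih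

set_option maxHeartbeats 1000000 in
lemma khr_aux_key {K : Type} [Field K] (q A B : K) (hq : q ≠ 0) (hA : A ≠ 0) (hB : B ≠ 0)
    (h21 : q ^ 2 - 1 ≠ 0) (h41 : q ^ 4 - 1 ≠ 0) :
    A⁻¹ / B * q * (q * (A ^ 2 - 1) / (A * (q ^ 2 - 1))) +
        (A⁻¹ - A) * B⁻¹ * ((A ^ 2 - q ^ 2) / (A * (q ^ 2 - 1))) * ((B ^ 2 - q ^ 4) / (q ^ 4 - 1)) +
      B / q * (q * (A ^ 2 - 1) / (A * (q ^ 2 - 1))) * ((A ^ 2 - q ^ 2) / (A * (q ^ 2 - 1))) =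
    B⁻¹ *
        (q * (A ^ 2 - 1) / (A * (q ^ 2 - 1)) * ((A ^ 2 * q ^ 2 - 1) / (A * (q ^ 2 - 1))) /
          (q * (q ^ 4 - 1) / (q ^ 2 * (q ^ 2 - 1)))) +
      B *
        (q * (A ^ 2 - 1) / (A * (q ^ 2 - 1)) * ((A ^ 2 - q ^ 2) / (A * (q ^ 2 - 1))) /
          (q * (q ^ 4 - 1) / (q ^ 2 * (q ^ 2 - 1)))) := by
  have hD : A ^ 2 * B * q * (q ^ 2 - 1) ^ 2 * (q ^ 4 - 1) ≠ 0 := by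
    exact mul_ne_zero (mul_ne_zero (mul_ne_zero (mul_ne_zero (pow_ne_zero _ hA) hB) hq)
      (pow_ne_zero _ h21)) h41
  set D := A ^ 2 * B * q * (q ^ 2 - 1) ^ 2 * (q ^ 4 - 1) with hDdef
  have e1 : A⁻¹ / B * q * (q * (A ^ 2 - 1) / (A * (q ^ 2 - 1)))
      = q ^ 3 * (A ^ 2 - 1) * (q ^ 2 - 1) * (q ^ 4 - 1) / D := by
    rw [eq_div_iff hD, hDdef]; field_simp
  have e2 : (A⁻¹ - A) * B⁻¹ * ((A ^ 2 - q ^ 2) / (A * (q ^ 2 - 1))) * ((B ^ 2 - q ^ 4) / (q ^ 4 - 1))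
      = q * (q ^ 2 - 1) * (1 - A ^ 2) * (A ^ 2 - q ^ 2) * (B ^ 2 - q ^ 4) / D := by
    rw [eq_div_iff hD, hDdef]; field_simp
  have e3 : B / q * (q * (A ^ 2 - 1) / (A * (q ^ 2 - 1))) * ((A ^ 2 - q ^ 2) / (A * (q ^ 2 - 1)))
      = B ^ 2 * q * (q ^ 4 - 1) * (A ^ 2 - 1) * (A ^ 2 - q ^ 2) / D := by
    rw [eq_div_iff hD, hDdef]; field_simp
  have e4 : B⁻¹ * (q * (A ^ 2 - 1) / (A * (q ^ 2 - 1)) * ((A ^ 2 * q ^ 2 - 1) / (A * (q ^ 2 - 1))) /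
          (q * (q ^ 4 - 1) / (q ^ 2 * (q ^ 2 - 1))))
      = q ^ 3 * (q ^ 2 - 1) * (A ^ 2 - 1) * (A ^ 2 * q ^ 2 - 1) / D := by
    rw [div_mul_div_comm, div_div_eq_mul_div, div_mul_eq_mul_div, div_div,
      inv_mul_eq_div, div_div, hDdef, div_eq_div_iff (mul_ne_zero (mul_ne_zero (mul_ne_zero (mul_ne_zero hA h21) (mul_ne_zero hA h21)) (mul_ne_zero hq h41)) hB) hD]
    ring
  have e5 : B * (q * (A ^ 2 - 1) / (A * (q ^ 2 - 1)) * ((A ^ 2 - q ^ 2) / (A * (q ^ 2 - 1))) /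
          (q * (q ^ 4 - 1) / (q ^ 2 * (q ^ 2 - 1))))
      = B ^ 2 * q ^ 3 * (q ^ 2 - 1) * (A ^ 2 - 1) * (A ^ 2 - q ^ 2) / D := by
    rw [eq_div_iff hD, hDdef]; field_simp
  rw [e1, e2, e3, e4, e5, ← add_div, ← add_div, ← add_div]
  congr 1
  ring


set_option maxHeartbeats 2000000 in
theorem khr_T2even_euler (N : ℕ) (hN : 1 ≤ N) (k' : ℕ) (hk : 1 ≤ k') :
    q ^ (-(N : ℤ) - 2 * (k' : ℤ) + 1) * qi N
      + (∑ l ∈ Finset.Icc 1 (k' - 1),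
          (-q ^ ((N : ℤ) + 4 * (l : ℤ) - 2 * (k' : ℤ)) * qi ((N : ℤ) - 1)
            + q ^ (-(N : ℤ) + 4 * (l : ℤ) - 2 * (k' : ℤ)) * qi ((N : ℤ) - 1)))
      + q ^ (2 * (k' : ℤ) - 1) * qi N * qi ((N : ℤ) - 1)
    = q ^ (-2 * (k' : ℤ)) * s2 N + q ^ (2 * (k' : ℤ)) * s11 N := by
  have hsum : (∑ l ∈ Finset.Icc 1 (k' - 1),
          (-q ^ ((N : ℤ) + 4 * (l : ℤ) - 2 * (k' : ℤ)) * qi ((N : ℤ) - 1)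
            + q ^ (-(N : ℤ) + 4 * (l : ℤ) - 2 * (k' : ℤ)) * qi ((N : ℤ) - 1)))
      = (((q ^ N)⁻¹ - q ^ N) * (((q ^ 2) ^ k')⁻¹) * qi ((N : ℤ) - 1)) *
          ∑ l ∈ Finset.Icc 1 (k' - 1), (q ^ 4) ^ l := by
    rw [Finset.mul_sum]
    refine Finset.sum_congr rfl (fun l _ => ?_)
    simp only [zpow_add₀ q_ne, zpow_sub₀ q_ne, zpow_neg, zpow_mul, zpow_natCast,
      zpow_one, zpow_ofNat]
    simp only [← inv_pow]
    ring
  have hgeom : ∑ l ∈ Finset.Icc 1 (k' - 1), (q ^ 4) ^ l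
      = ((q ^ 4) ^ k' - q ^ 4) / (q ^ 4 - 1) := by
    rw [eq_div_iff h41]
    have h := geom (q ^ 4) (k' - 1)
    rw [Nat.sub_add_cancel hk] at h
    linear_combination h
  rw [hsum, hgeom]
  simp only [s2, s11]
  rw [qiN, qiNm, qiNp, qi_two]
  simp only [zpow_add₀ q_ne, zpow_sub₀ q_ne, zpow_neg, zpow_mul, zpow_natCast,
    zpow_one, zpow_ofNat]
  have h44 : (q ^ 4) ^ k' = ((q ^ 2) ^ k') ^ 2 := by
    rw [← pow_mul, ← pow_mul, ← pow_mul]; congr 1; ring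
  rw [h44]
  simp only [inv_pow, pow_one]
  have hA0 : q ^ N ≠ 0 := pow_ne_zero _ q_ne
  have hB0 : (q ^ 2) ^ k' ≠ 0 := pow_ne_zero _ (pow_ne_zero _ q_ne)
  generalize q ^ N = A at hA0 ⊢
  generalize (q ^ 2) ^ k' = B at hB0 ⊢
  exact khr_aux_key q A B q_ne hA0 hB0 h21 h41
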